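/- (Median of the chi-squared distribution is below its mean.) For every natural number ν ≥ 1, the chi-squared distribution with ν degrees of freedom, i.e., the Gamma distribution with shape parameter ν/2 and rate parameter 1/2, assigns probability strictly greater than 1/2 to the interval (−∞, ν): if X ~ χ²_ν then P(X < ν) > 1/2. -/

import Mathlib

open MeasureTheory ProbabilityTheory Real Set
open scoped ENNReal NNReal

namespace ChiSqAux

/-- the elementary inequality `2 log w < w - 1/w` for `w > 1`. -/
lemma two_log_lt {w : ℝ} (hw : 1 < w) : 2 * Real.log w < w - 1 / w := by
  have hw0 : (0:ℝ) < w := by linarith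
  have h1 : 0 < Real.log w := Real.log_pos hw
  have h2 : Real.log w < Real.sinh (Real.log w) := Real.self_lt_sinh_iff.mpr h1
  rw [Real.sinh_log hw0] at h2
  rw [one_div]
  linarith

noncomputable def g (a x : ℝ) : ℝ := x ^ (a - 1) * Real.exp (-(x / 2))

lemma g_pos {a x : ℝ} (hx : 0 < x) : 0 < g a x := by
  unfold g; positivity

/-- pointwise comparison: for `u > 2a`, the integrand obtained from the tail by the
substitution `u ↦ (2a)²/u` dominates. -/
lemma pointwise_lt {a u : ℝ} (ha : 0 < a) (hu : 2 * a < u) :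
    g a u < ((2 * a) ^ 2 / u ^ 2) * g a ((2 * a) ^ 2 / u) := by
  have ha2 : 0 < 2 * a := by linarith
  have hu0 : 0 < u := lt_trans ha2 hu
  have hc : (0:ℝ) < (2 * a) ^ 2 := by positivity
  have ht0 : 0 < (2 * a) ^ 2 / u := by positivity
  have hL : 0 < g a u := g_pos hu0
  have hR : 0 < ((2 * a) ^ 2 / u ^ 2) * g a ((2 * a) ^ 2 / u) := by
    have := g_pos (a := a) ht0
    positivity
  rw [← Real.exp_log hL, ← Real.exp_log hR, Real.exp_lt_exp]
  unfold g
  rw [Real.log_mul (by positivity) (by positivity),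
    Real.log_mul (by positivity) (by positivity),
    Real.log_mul (by positivity) (by positivity),
    Real.log_exp, Real.log_exp, Real.log_rpow hu0, Real.log_rpow ht0,
    Real.log_div hc.ne' (by positivity), Real.log_div hc.ne' (by positivity),
    Real.log_pow, Real.log_pow]
  -- reduce to `2 log w < w - 1/w` with `w = u / (2a)`
  have hw : 1 < u / (2 * a) := (one_lt_div ha2).mpr hu
  have key := two_log_lt hw
  rw [Real.log_div hu0.ne' ha2.ne'] at key
  have h1w : 1 / (u / (2 * a)) = 2 * a / u := by field_simp
  rw [h1w] at key
  have hkey2 : 2 * a * (Real.log u - Real.log (2 * a)) < u / 2 - (2 * a) ^ 2 / u / 2 := by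
    have heq : a * (u / (2 * a) - 2 * a / u) = u / 2 - (2 * a) ^ 2 / u / 2 := by
      field_simp
    calc 2 * a * (Real.log u - Real.log (2 * a))
        = a * (2 * (Real.log u - Real.log (2 * a))) := by ring
      _ < a * (u / (2 * a) - 2 * a / u) := mul_lt_mul_of_pos_left key ha
      _ = u / 2 - (2 * a) ^ 2 / u / 2 := heq
  push_cast
  nlinarith [hkey2]

lemma integrableOn_g {a : ℝ} (ha : 0 < a) : IntegrableOn (g a) (Ioi 0) := by
  have h := integrableOn_rpow_mul_exp_neg_mul_rpow (s := a - 1) (p := 1) (b := 1/2)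
    (by linarith) zero_lt_one (by norm_num)
  refine h.congr_fun (fun x hx => ?_) measurableSet_Ioi
  simp only [g, Real.rpow_one]
  ring_nf

/-- the key strict inequality between tail and head integrals. -/
lemma tail_lt_head {a : ℝ} (ha : 0 < a) :
    ∫ x in Ioi (2 * a), g a x < ∫ x in Ioo 0 (2 * a), g a x := by
  have ha2 : 0 < 2 * a := by linarith
  set c : ℝ := (2 * a) ^ 2 with hc
  have hcpos : 0 < c := by positivity
  set f : ℝ → ℝ := fun u => c / u with hf
  set f' : ℝ → ℝ := fun u => -(c / u ^ 2) with hf'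
  have himg : f '' Ioi (2 * a) = Ioo 0 (2 * a) := by
    ext y
    constructor
    · rintro ⟨u, hu, rfl⟩
      rw [mem_Ioi] at hu
      have hu0 : 0 < u := lt_trans ha2 hu
      constructor
      · positivity
      · rw [div_lt_iff₀ hu0, hc]
        nlinarith
    · rintro ⟨hy0, hy⟩
      refine ⟨c / y, ?_, ?_⟩
      · rw [mem_Ioi, lt_div_iff₀ hy0, hc]
        nlinarith
      · rw [hf]
        exact div_div_cancel₀ hcpos.ne'
  have hderiv : ∀ u ∈ Ioi (2 * a), HasDerivWithinAt f (f' u) (Ioi (2 * a)) u := by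
    intro u hu
    have hu0 : u ≠ 0 := (lt_trans ha2 hu).ne'
    have h1 : HasDerivAt (fun u : ℝ => u⁻¹) (-(u ^ 2)⁻¹) u := hasDerivAt_inv hu0
    have h2 : HasDerivAt (fun u : ℝ => c * u⁻¹) (c * -(u ^ 2)⁻¹) u := h1.const_mul c
    have hfun : f = fun u : ℝ => c * u⁻¹ := by
      funext v; rw [hf]; exact div_eq_mul_inv _ _
    have hval : f' u = c * -(u ^ 2)⁻¹ := by rw [hf']; ring
    rw [hfun, hval]
    exact h2.hasDerivWithinAt
  have hinj : InjOn f (Ioi (2 * a)) := by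
    intro u hu v hv h
    have hu0 : (0:ℝ) < u := lt_trans ha2 hu
    have hv0 : (0:ℝ) < v := lt_trans ha2 hv
    have h' : c / u = c / v := h
    rw [div_eq_div_iff hu0.ne' hv0.ne'] at h'
    exact (mul_left_cancel₀ hcpos.ne' h').symm
  have hchange : ∫ x in Ioo 0 (2 * a), g a x
      = ∫ u in Ioi (2 * a), |f' u| • g a (f u) := by
    rw [← himg, integral_image_eq_integral_abs_deriv_smul measurableSet_Ioi hderiv hinj]
  have habs : ∀ u ∈ Ioi (2 * a), |f' u| = c / u ^ 2 := by
    intro u hu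
    have hu0 : (0:ℝ) < u := lt_trans ha2 hu
    rw [hf', abs_neg, abs_of_pos (by positivity)]
  have hIg : IntegrableOn (g a) (Ioi (2 * a)) :=
    (integrableOn_g ha).mono_set (Ioi_subset_Ioi ha2.le)
  have hIh : IntegrableOn (fun u => |f' u| • g a (f u)) (Ioi (2 * a)) := by
    rw [← integrableOn_image_iff_integrableOn_abs_deriv_smul measurableSet_Ioi hderiv hinj]
    rw [himg]
    exact (integrableOn_g ha).mono_set Ioo_subset_Ioi_self
  rw [hchange]
  have hsub : 0 < ∫ u in Ioi (2 * a), (|f' u| • g a (f u) - g a u) := by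
    rw [setIntegral_pos_iff_support_of_nonneg_ae]
    · have : Function.support (fun u => |f' u| • g a (f u) - g a u) ∩ Ioi (2 * a)
          = Ioi (2 * a) := by
        apply inter_eq_self_of_subset_right
        intro u hu
        have hlt := pointwise_lt ha (mem_Ioi.mp hu)
        have hpos : 0 < |f' u| • g a (f u) - g a u := by
          rw [habs u hu]
          simp only [smul_eq_mul, hf, hc]
          linarith
        exact Function.mem_support.mpr hpos.ne'
      rw [this, Real.volume_Ioi]
      exact ENNReal.zero_lt_top
    · rw [Filter.EventuallyLE, ae_restrict_iff' measurableSet_Ioi]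
      refine ae_of_all _ fun u hu => ?_
      have hlt := pointwise_lt ha (mem_Ioi.mp hu)
      simp only [Pi.zero_apply, smul_eq_mul, sub_nonneg]
      rw [habs u hu]
      simp only [hf, hc]
      linarith
    · exact hIh.sub hIg
  have := integral_sub hIh hIg
  rw [this] at hsub
  linarith

end ChiSqAux

open ChiSqAux

/-- The median of the chi-squared distribution lies below its mean: for `ν ≥ 1`, the
chi-squared distribution with `ν` degrees of freedom (the Gamma distribution with shape
`ν/2` and rate `1/2`) assigns probability strictly greater than `1/2` to `(−∞, ν)`. -/
theorem chiSq_prob_lt_mean_gt_half (ν : ℕ) (hν : 1 ≤ ν) :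
    1 / 2 < gammaMeasure ((ν : ℝ) / 2) (1 / 2) (Set.Iio (ν : ℝ)) := by
  set a : ℝ := (ν : ℝ) / 2 with ha_def
  have hν0 : (0:ℝ) < ν := by exact_mod_cast Nat.lt_of_lt_of_le Nat.zero_lt_one hν
  have ha : 0 < a := by positivity
  have hν2 : (ν : ℝ) = 2 * a := by rw [ha_def]; ring
  set C : ℝ := (1/2 : ℝ) ^ a / Real.Gamma a with hC_def
  have hC : 0 < C := by
    have := Real.Gamma_pos_of_pos ha
    positivity
  have hr : (0:ℝ) < 1/2 := by norm_num
  -- the pdf equals `C * g a` on positive reals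
  have hpdf_eq : ∀ x : ℝ, 0 < x → gammaPDFReal a (1/2) x = C * g a x := by
    intro x hx
    unfold gammaPDFReal g
    rw [if_pos hx.le, hC_def, show -((1:ℝ)/2 * x) = -(x/2) by ring, mul_assoc]
  -- integrability of the pdf on the relevant sets
  have hInt1 : IntegrableOn (gammaPDFReal a (1/2)) (Ioo 0 (ν:ℝ)) := by
    have h0 : IntegrableOn (g a) (Ioo 0 (ν:ℝ)) :=
      (integrableOn_g ha).mono_set Ioo_subset_Ioi_self
    have h : IntegrableOn (fun x => C * g a x) (Ioo 0 (ν:ℝ)) := h0.const_mul C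
    exact h.congr_fun (fun x hx => (hpdf_eq x hx.1).symm) measurableSet_Ioo
  have hInt2 : IntegrableOn (gammaPDFReal a (1/2)) (Ioi (ν:ℝ)) := by
    have h0 : IntegrableOn (g a) (Ioi (ν:ℝ)) :=
      (integrableOn_g ha).mono_set (Ioi_subset_Ioi hν0.le)
    have h : IntegrableOn (fun x => C * g a x) (Ioi (ν:ℝ)) := h0.const_mul C
    exact h.congr_fun (fun x hx => (hpdf_eq x (lt_trans hν0 hx)).symm) measurableSet_Ioi
  have hnn : ∀ x : ℝ, 0 ≤ gammaPDFReal a (1/2) x := gammaPDFReal_nonneg ha hr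
  -- the two measures as real integrals
  have hmeasIio : gammaMeasure a (1/2) (Iio (ν:ℝ))
      = ENNReal.ofReal (∫ x in Ioo 0 (ν:ℝ), gammaPDFReal a (1/2) x) := by
    rw [gammaMeasure, withDensity_apply _ measurableSet_Iio]
    have hsplit : ∫⁻ x in Iio (ν:ℝ), gammaPDF a (1/2) x
        = ∫⁻ x in Ioo 0 (ν:ℝ), gammaPDF a (1/2) x := by
      have hdisj : Disjoint (Iio (0:ℝ)) (Ico 0 (ν:ℝ)) := by
        rw [Set.disjoint_left]
        rintro x hx ⟨h0, _⟩
        exact absurd h0 (not_le.mpr hx)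
      rw [← Iio_union_Ico_eq_Iio hν0.le, lintegral_union measurableSet_Ico hdisj]
      have hzero : ∫⁻ x in Iio (0:ℝ), gammaPDF a (1/2) x = 0 := by
        rw [setLIntegral_congr_fun measurableSet_Iio
          (fun x (hx : x ∈ Iio (0:ℝ)) => gammaPDF_of_neg hx), lintegral_zero]
      rw [hzero, zero_add, ← setLIntegral_congr Ioo_ae_eq_Ico]
    rw [hsplit]
    simp only [gammaPDF]
    exact (ofReal_integral_eq_lintegral_ofReal hInt1 (ae_of_all _ fun x => hnn x)).symm
  have hmeasIci : gammaMeasure a (1/2) (Ici (ν:ℝ))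
      = ENNReal.ofReal (∫ x in Ioi (ν:ℝ), gammaPDFReal a (1/2) x) := by
    rw [gammaMeasure, withDensity_apply _ measurableSet_Ici,
      ← setLIntegral_congr Ioi_ae_eq_Ici]
    simp only [gammaPDF]
    exact (ofReal_integral_eq_lintegral_ofReal hInt2 (ae_of_all _ fun x => hnn x)).symm
  -- rewrite the integrals via `g`
  have hI1 : ∫ x in Ioo 0 (ν:ℝ), gammaPDFReal a (1/2) x
      = C * ∫ x in Ioo 0 (2*a), g a x := by
    rw [← hν2, ← integral_const_mul]
    exact setIntegral_congr_fun measurableSet_Ioo fun x hx => hpdf_eq x hx.1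
  have hI2 : ∫ x in Ioi (ν:ℝ), gammaPDFReal a (1/2) x
      = C * ∫ x in Ioi (2*a), g a x := by
    rw [← hν2, ← integral_const_mul]
    exact setIntegral_congr_fun measurableSet_Ioi fun x hx => hpdf_eq x (lt_trans hν0 hx)
  -- the two pieces sum to one
  have hprob : IsProbabilityMeasure (gammaMeasure a (1/2)) :=
    isProbabilityMeasure_gammaMeasure ha hr
  have hsum : gammaMeasure a (1/2) (Iio (ν:ℝ)) + gammaMeasure a (1/2) (Ici (ν:ℝ)) = 1 := by
    rw [← measure_union (Iio_disjoint_Ici le_rfl) measurableSet_Ici, Iio_union_Ici,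
      measure_univ]
  set X : ℝ := C * ∫ x in Ioo 0 (2*a), g a x with hX_def
  set Y : ℝ := C * ∫ x in Ioi (2*a), g a x with hY_def
  have hXnn : 0 ≤ X := by
    refine mul_nonneg hC.le (setIntegral_nonneg measurableSet_Ioo fun x hx => (g_pos hx.1).le)
  have hYnn : 0 ≤ Y := by
    refine mul_nonneg hC.le (setIntegral_nonneg measurableSet_Ioi fun x hx =>
      (g_pos (lt_trans (by positivity) hx)).le)
  rw [hmeasIio, hmeasIci, hI1, hI2] at hsum
  rw [← ENNReal.ofReal_add hXnn hYnn] at hsum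
  have hsum' : X + Y = 1 := by
    rwa [ENNReal.ofReal_eq_one] at hsum
  have hYX : Y < X := by
    rw [hX_def, hY_def]
    exact mul_lt_mul_of_pos_left (tail_lt_head ha) hC
  have hhalf : (1:ℝ)/2 < X := by linarith
  rw [hmeasIio, hI1]
  have hconv : (1/2 : ℝ≥0∞) = ENNReal.ofReal (1/2) := by
    rw [ENNReal.ofReal_div_of_pos (by norm_num : (0:ℝ) < 2), ENNReal.ofReal_one,
      ENNReal.ofReal_ofNat]
  rw [hconv]
  exact (ENNReal.ofReal_lt_ofReal_iff_of_nonneg (by norm_num)).mpr hhalf
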